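/- Define, for real m > −1 and real λ with (1+m)² − π²λ ≠ 0, η(m,λ) = 4π²λ / ((1+m)² − π²λ), β_m(m,λ) = −(2 + η(m,λ)) m − (10π²λ / (1+m)²)(1 + η(m,λ)/6), and β_λ(m,λ) = −2 η(m,λ) λ + (4π²λ² / (1+m)³)(1 + η(m,λ)/6). Then there exists a non-Gaussian fixed point: a pair (m*, λ*) with −1 < m* < 0, λ* > 0 and (1+m*)² − π²λ* > 0 such that β_m(m*,λ*) = 0 and β_λ(m*,λ*) = 0. -/

import Mathlib

open Real

/-- Anomalous dimension of the φ⁴ truncation. -/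
noncomputable def eta (m lam : ℝ) : ℝ :=
  4 * π ^ 2 * lam / ((1 + m) ^ 2 - π ^ 2 * lam)

/-- Beta function of the dimensionless mass squared. -/
noncomputable def betaM (m lam : ℝ) : ℝ :=
  -(2 + eta m lam) * m - (10 * π ^ 2 * lam / (1 + m) ^ 2) * (1 + eta m lam / 6)

/-- Beta function of the dimensionless quartic melonic coupling. -/
noncomputable def betaLam (m lam : ℝ) : ℝ :=
  -2 * eta m lam * lam + (4 * π ^ 2 * lam ^ 2 / (1 + m) ^ 3) * (1 + eta m lam / 6)

/-- Existence of a non-Gaussian (Wilson–Fisher-like) fixed point of the truncated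
flow, above the singularity line of the anomalous dimension. -/
theorem exists_nonGaussian_fixed_point :
    ∃ m lam : ℝ, -1 < m ∧ m < 0 ∧ 0 < lam ∧ 0 < (1 + m) ^ 2 - π ^ 2 * lam ∧
      betaM m lam = 0 ∧ betaLam m lam = 0 := by
  have hpi2 : (0:ℝ) < π ^ 2 := by positivity
  have h34 : Real.sqrt 34 ^ 2 = 34 := Real.sq_sqrt (by norm_num)
  have hs0 : (0:ℝ) ≤ Real.sqrt 34 := Real.sqrt_nonneg _
  have hs5 : (5:ℝ) < Real.sqrt 34 := by nlinarith
  have hs6 : Real.sqrt 34 < 6 := by nlinarith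
  set s := Real.sqrt 34 with hsdef
  set u : ℝ := (10 + s) / 33 with hudef
  have hu1 : (15:ℝ)/33 < u := by rw [hudef]; linarith
  have hu2 : u < 16/33 := by rw [hudef]; linarith
  have hu0 : 0 < u := by linarith
  have hu0' : u ≠ 0 := ne_of_gt hu0
  have hu : 33 * u ^ 2 - 20 * u + 2 = 0 := by
    rw [hudef]; field_simp; nlinarith [h34]
  have h6u : 0 < 6 * u - 1 := by linarith
  have h6u' : 6 * u - 1 ≠ 0 := ne_of_gt h6u
  set e : ℝ := 2 * (1 - u) / (6 * u - 1) with hedef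
  have he : e * (6 * u - 1) = 2 * (1 - u) := by
    rw [hedef]; exact div_mul_cancel₀ _ h6u'
  have he0 : 0 < e := by
    rw [hedef]; apply div_pos <;> linarith
  have he4 : 0 < 4 + e := by linarith
  have he4' : (4:ℝ) + e ≠ 0 := ne_of_gt he4
  set lam : ℝ := e * u ^ 2 / ((4 + e) * π ^ 2) with hlamdef
  have hlam0 : 0 < lam := by rw [hlamdef]; positivity
  have hx : π ^ 2 * lam = e * u ^ 2 / (4 + e) := by
    rw [hlamdef]; field_simp
  have hden : (1 + (u - 1)) ^ 2 - π ^ 2 * lam = 4 * u ^ 2 / (4 + e) := by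
    rw [hx]; field_simp; ring
  have hdpos : 0 < (1 + (u - 1)) ^ 2 - π ^ 2 * lam := by
    rw [hden]; positivity
  have heta : eta (u - 1) lam = e := by
    rw [eta, hden, show 4 * π ^ 2 * lam = 4 * (π ^ 2 * lam) by ring, hx]
    field_simp
  refine ⟨u - 1, lam, by linarith, by linarith, hlam0, hdpos, ?_, ?_⟩
  · rw [betaM, heta, show (10:ℝ) * π ^ 2 * lam = 10 * (π ^ 2 * lam) by ring, hx]
    have h1 : (1 + (u - 1)) = u := by ring
    rw [h1]
    field_simp
    clear_value lam e u s
    linear_combination (((e+22*u-10)*(-6*u-4) - 36*u - 24)*(66*u-29)/5) * he + (((e+22*u-10)*(-6*u-4) - 36*u - 24)*(-4*(66*u-29) - 12*(e-22*u+10))/5 - 88*u - 56) * hu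
  · rw [betaLam, heta,
      show (4:ℝ) * π ^ 2 * lam ^ 2 = 4 * (π ^ 2 * lam) * lam by ring, hx]
    have h1 : (1 + (u - 1)) = u := by ring
    rw [h1]
    field_simp
    clear_value lam e u s
    linear_combination (e*lam*(132*u-68)/5) * he + (e*lam*(-24*e-8)/5) * hu
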